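/- Let κ ≥ 0. Let p ∈ ℝ⁴ with p ≠ 0, ⟨p,p⟩ = 0 and p⁰ > 0. Let w ∈ ℝ⁴ with ⟨p,w⟩ = 0 and ⟨w,w⟩ = −κ². Let e = e' + i e'' ∈ ℂ⁴ with ⟨e,e⟩ = −1 (ℂ-bilinear extension), e''⁰ > 0 and ⟨e'',e''⟩ > 0 (i.e. e lies in the tube T₊). Then ⟨e,p⟩ ≠ 0 (indeed Im⟨e,p⟩ = ⟨e'',p⟩ > 0), and |exp(−i·⟨e,w⟩/⟨e,p⟩)| ≤ |exp(i·κ/⟨e,p⟩)|. (Proposition 2.1: the bound on the infinite-spin intertwiner exp(−i(eE_p(k))/(ep)) in the tube, which makes the standard intertwiner u^{κ(0)} = exp(−iκ√(−e²)/(ep))·exp(−i(eE_p(k))/(ep)) bounded by 1 there.) -/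

import Mathlib

noncomputable section

/-- Minkowski bilinear form on ℝ⁴. -/
def mink (a b : Fin 4 → ℝ) : ℝ := a 0 * b 0 - a 1 * b 1 - a 2 * b 2 - a 3 * b 3

/-- Minkowski bilinear form, ℂ-bilinearly extended to ℂ⁴. -/
def minkC (a b : Fin 4 → ℂ) : ℂ := a 0 * b 0 - a 1 * b 1 - a 2 * b 2 - a 3 * b 3

lemma mink_nonpos_of_orth (p u : Fin 4 → ℝ) (hpp : mink p p = 0) (hp0 : 0 < p 0)
    (h : mink p u = 0) : mink u u ≤ 0 := by
  simp only [mink] at *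
  have hA : p 0 * u 0 = p 1 * u 1 + p 2 * u 2 + p 3 * u 3 := by linarith
  have hC : (p 0 * u 0) ^ 2 ≤ (p 1 ^ 2 + p 2 ^ 2 + p 3 ^ 2) * (u 1 ^ 2 + u 2 ^ 2 + u 3 ^ 2) := by
    rw [hA]
    nlinarith [sq_nonneg (p 1 * u 2 - p 2 * u 1), sq_nonneg (p 1 * u 3 - p 3 * u 1),
      sq_nonneg (p 2 * u 3 - p 3 * u 2)]
  nlinarith [hC, mul_pos hp0 hp0]

lemma mink_cs (p u v : Fin 4 → ℝ) (hpp : mink p p = 0) (hp0 : 0 < p 0)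
    (hu : mink p u = 0) (hv : mink p v = 0) :
    (mink u v) ^ 2 ≤ mink u u * mink v v := by
  have key : ∀ t : ℝ, mink v v * (t * t) + (2 * mink u v) * t + mink u u ≤ 0 := by
    intro t
    have horth : mink p (fun i => u i + t * v i) = 0 := by
      have : mink p (fun i => u i + t * v i) = mink p u + t * mink p v := by
        simp only [mink]; ring
      rw [this, hu, hv]; ring
    have h := mink_nonpos_of_orth p (fun i => u i + t * v i) hpp hp0 horth
    have hexp : mink (fun i => u i + t * v i) (fun i => u i + t * v i)
        = mink u u + 2 * t * mink u v + t ^ 2 * mink v v := by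
      simp only [mink]; ring
    rw [hexp] at h; nlinarith
  have hd := discrim_le_zero_of_nonpos key
  rw [discrim] at hd
  nlinarith

lemma mink_pos_forward (b p : Fin 4 → ℝ) (hb0 : 0 < b 0) (hbb : 0 < mink b b)
    (hp0 : 0 < p 0) (hpp : mink p p = 0) : 0 < mink b p := by
  simp only [mink] at *
  have hC : (b 1 * p 1 + b 2 * p 2 + b 3 * p 3) ^ 2
      ≤ (b 1 ^ 2 + b 2 ^ 2 + b 3 ^ 2) * (p 1 ^ 2 + p 2 ^ 2 + p 3 ^ 2) := by
    nlinarith [sq_nonneg (b 1 * p 2 - b 2 * p 1), sq_nonneg (b 1 * p 3 - b 3 * p 1),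
      sq_nonneg (b 2 * p 3 - b 3 * p 2)]
  nlinarith [hC, mul_pos hb0 hp0, mul_pos hp0 hp0, mul_pos hb0 hb0]

/-- Proposition 2.1: the bound on the infinite-spin intertwiner in the tube `T₊`. -/
theorem intertwiner_bound_in_tube (κ : ℝ) (hκ : 0 ≤ κ)
    (p : Fin 4 → ℝ) (hp0 : p ≠ 0) (hpp : mink p p = 0) (hppos : 0 < p 0)
    (w : Fin 4 → ℝ) (hpw : mink p w = 0) (hww : mink w w = -κ ^ 2)
    (e : Fin 4 → ℂ) (hee : minkC e e = -1)
    (he''0 : 0 < (e 0).im)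
    (he'' : 0 < mink (fun i => (e i).im) (fun i => (e i).im)) :
    minkC e (fun i => (p i : ℂ)) ≠ 0 ∧
      (minkC e (fun i => (p i : ℂ))).im = mink (fun i => (e i).im) p ∧
      0 < (minkC e (fun i => (p i : ℂ))).im ∧
      ‖(Complex.exp (-Complex.I * minkC e (fun i => (w i : ℂ)) /
            minkC e (fun i => (p i : ℂ))))‖ ≤
        ‖Complex.exp (Complex.I * (κ : ℂ) / minkC e (fun i => (p i : ℂ)))‖ := by
  set a : Fin 4 → ℝ := fun i => (e i).re with ha
  set b : Fin 4 → ℝ := fun i => (e i).im with hb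
  have hre : ∀ x : Fin 4 → ℝ, (minkC e (fun i => (x i : ℂ))).re = mink a x := by
    intro x
    simp [minkC, mink, Complex.mul_re, ha, hb]
  have him : ∀ x : Fin 4 → ℝ, (minkC e (fun i => (x i : ℂ))).im = mink b x := by
    intro x
    simp [minkC, mink, Complex.mul_im, ha, hb]
  have h1 : mink a a - mink b b = -1 := by
    have := congrArg Complex.re hee
    simp [minkC, mink, Complex.mul_re, ha, hb] at this
    simp only [mink]; linarith
  have h2 : mink a b = 0 := by
    have := congrArg Complex.im hee
    simp [minkC, mink, Complex.mul_im, ha, hb] at this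
    simp only [mink]; linarith
  have hbp : 0 < mink b p := mink_pos_forward b p he''0 he'' hppos hpp
  have hepim : (minkC e (fun i => (p i : ℂ))).im = mink b p := him p
  have hepne : minkC e (fun i => (p i : ℂ)) ≠ 0 := by
    intro h
    rw [h] at hepim
    simp at hepim
    rw [← hepim] at hbp
    exact lt_irrefl 0 hbp
  refine ⟨hepne, hepim, by rw [hepim]; exact hbp, ?_⟩
  -- key real inequality
  set v : Fin 4 → ℝ := fun i => mink b p * a i - mink a p * b i with hv
  have hpv : mink p v = 0 := by
    simp only [mink, hv]; ring
  have hcs := mink_cs p v w hpp hppos hpv hpw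
  have hvw : mink v w = mink b p * mink a w - mink a p * mink b w := by
    simp only [mink, hv]; ring
  have hvv : mink v v = (mink b p) ^ 2 * mink a a
      - 2 * (mink b p) * (mink a p) * (mink a b) + (mink a p) ^ 2 * mink b b := by
    simp only [mink, hv]; ring
  have key : mink b w * mink a p - mink a w * mink b p ≤ κ * mink b p := by
    have hX2 : (mink v w) ^ 2 ≤ (κ * mink b p) ^ 2 := by
      have haa : mink a a = mink b b - 1 := by linarith
      rw [hvv, hww, haa, h2] at hcs
      nlinarith [hcs, mul_nonneg (mul_nonneg (sq_nonneg κ) he''.le) (sq_nonneg (mink a p)),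
        mul_nonneg (mul_nonneg (sq_nonneg κ) he''.le) (sq_nonneg (mink b p))]
    have hkbp : 0 ≤ κ * mink b p := mul_nonneg hκ hbp.le
    nlinarith [sq_nonneg (κ * mink b p + mink v w), hvw]
  -- reduce the complex inequality to the real one
  rw [Complex.norm_exp, Complex.norm_exp, Real.exp_le_exp]
  have hN : 0 < Complex.normSq (minkC e (fun i => (p i : ℂ))) :=
    Complex.normSq_pos.2 hepne
  rw [Complex.div_re, Complex.div_re]
  have hewre : (-Complex.I * minkC e (fun i => (w i : ℂ))).re = mink b w := by
    simp [Complex.mul_re, him w]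
  have hewim : (-Complex.I * minkC e (fun i => (w i : ℂ))).im = -(mink a w) := by
    simp [Complex.mul_im, hre w]
  have hkre : (Complex.I * (κ : ℂ)).re = 0 := by simp
  have hkim : (Complex.I * (κ : ℂ)).im = κ := by simp
  rw [hewre, hewim, hkre, hkim, hepim, hre p]
  rw [← add_div, ← add_div, div_le_div_iff_of_pos_right hN]
  linarith [key]
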